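/- There exists a 2-colouring of the edges of the complete symmetric digraph on the positive integers such that every monochromatic directed path has upper density 0. -/

import Mathlib

open scoped Classical

/-- Upper density of a set of positive integers. -/
noncomputable def upperDensity (A : Set ℕ) : ℝ :=
  Filter.limsup
    (fun n : ℕ => (((Finset.Icc 1 n).filter (fun m => m ∈ A)).card : ℝ) / n)
    Filter.atTop

/- Auxiliary construction -/

def dL (x : ℕ) : ℕ := Nat.log 2 (max x 2)
def dlv (x : ℕ) : ℕ := Nat.log 2 (dL x)
def dphi (x : ℕ) : ℕ := 3 * 2 ^ dlv x - dL x
def dcol (m n : ℕ) : Fin 2 :=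
  if dlv m < dlv n ∨ (dlv m = dlv n ∧ 2 ≤ n ∧ 2 * n ≤ m) then 0 else 1

lemma dL_pos (x : ℕ) : 1 ≤ dL x := by
  have h1 : Nat.log 2 2 = 1 := by decide
  calc 1 = Nat.log 2 2 := h1.symm
    _ ≤ dL x := Nat.log_mono_right (le_max_right x 2)

lemma pow_dlv_le (x : ℕ) : 2 ^ dlv x ≤ dL x :=
  Nat.pow_log_le_self 2 (by have := dL_pos x; omega)

lemma dL_lt (x : ℕ) : dL x < 2 ^ (dlv x + 1) :=
  Nat.lt_pow_succ_log_self (by norm_num) _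

lemma dlv_mono {x y : ℕ} (h : x ≤ y) : dlv x ≤ dlv y :=
  Nat.log_mono_right (Nat.log_mono_right (max_le_max h le_rfl))

lemma lt_of_dlv_le {x K : ℕ} (h : dlv x ≤ K) : x < 2 ^ 2 ^ (K + 1) := by
  have h1 : x ≤ max x 2 := le_max_left x 2
  have h2 : max x 2 < 2 ^ (dL x + 1) := Nat.lt_pow_succ_log_self (by norm_num) _
  have h3 : dL x + 1 ≤ 2 ^ (dlv x + 1) := dL_lt x
  have h4 : (2 : ℕ) ^ (dlv x + 1) ≤ 2 ^ (K + 1) := Nat.pow_le_pow_right (by norm_num) (by omega)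
  calc x ≤ max x 2 := h1
    _ < 2 ^ (dL x + 1) := h2
    _ ≤ 2 ^ 2 ^ (dlv x + 1) := Nat.pow_le_pow_right (by norm_num) h3
    _ ≤ 2 ^ 2 ^ (K + 1) := Nat.pow_le_pow_right (by norm_num) h4

lemma dphi_lt_of_dcol_zero {m n : ℕ} (h : dcol m n = 0) : dphi m < dphi n := by
  have hcond : dlv m < dlv n ∨ (dlv m = dlv n ∧ 2 ≤ n ∧ 2 * n ≤ m) := by
    by_contra hc
    simp only [dcol, if_neg hc] at h
    exact absurd h (by decide)
  rcases hcond with hlt | ⟨heq, hn2, hmn⟩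
  · -- cross level
    have h1 : 2 ^ dlv m ≤ dL m := pow_dlv_le m
    have h2 : dL n < 2 ^ (dlv n + 1) := dL_lt n
    have h3 : (2 : ℕ) ^ (dlv m + 1) ≤ 2 ^ dlv n := Nat.pow_le_pow_right (by norm_num) (by omega)
    have e1 : (2 : ℕ) ^ (dlv m + 1) = 2 * 2 ^ dlv m := by ring
    have e2 : (2 : ℕ) ^ (dlv n + 1) = 2 * 2 ^ dlv n := by ring
    unfold dphi
    omega
  · -- same level, halving step
    have hm2 : max m 2 = m := max_eq_left (by omega)
    have hn2' : max n 2 = n := max_eq_left hn2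
    have hlog : Nat.log 2 n + 1 ≤ Nat.log 2 m := by
      have : Nat.log 2 (n * 2) ≤ Nat.log 2 m := Nat.log_mono_right (by omega)
      rwa [Nat.log_mul_base (by norm_num) (by omega)] at this
    have hLm : dL m = Nat.log 2 m := by rw [dL, hm2]
    have hLn : dL n = Nat.log 2 n := by rw [dL, hn2']
    have h1 : 2 ^ dlv m ≤ dL m := pow_dlv_le m
    have h2 : dL m < 2 ^ (dlv m + 1) := dL_lt m
    have e2 : (2 : ℕ) ^ (dlv m + 1) = 2 * 2 ^ dlv m := by ring
    unfold dphi
    rw [heq] at *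
    omega

lemma dphi_lt_bound {x : ℕ} : dphi x < 3 * 2 ^ dlv x := by
  have := dL_pos x
  have h1 : 2 ^ dlv x ≤ dL x := pow_dlv_le x
  unfold dphi
  have : 0 < 2 ^ dlv x := Nat.pow_pos (by norm_num)
  omega

lemma two_mul_le_two_pow (k : ℕ) : 2 * k ≤ 2 ^ k := by
  induction k with
  | zero => simp
  | succ n ih =>
    rcases Nat.eq_zero_or_pos n with h | h
    · subst h; norm_num
    · have : 2 ≤ 2 ^ n := by
        calc 2 = 2 * 1 := by ring
          _ ≤ 2 * n := by omega
          _ ≤ 2 ^ n := ih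
      rw [pow_succ]
      omega

lemma dlv_tendsto : Filter.Tendsto dlv Filter.atTop Filter.atTop := by
  apply Filter.tendsto_atTop_atTop.mpr
  intro M
  refine ⟨2 ^ 2 ^ M, fun n hn => ?_⟩
  have h2 : (2 : ℕ) ≤ 2 ^ 2 ^ M := by
    calc (2:ℕ) = 2 ^ 1 := rfl
      _ ≤ 2 ^ 2 ^ M := Nat.pow_le_pow_right (by norm_num) (Nat.one_le_two_pow)
  have hL : 2 ^ M ≤ dL n := by
    have : dL (2 ^ 2 ^ M) = 2 ^ M := by
      rw [dL, max_eq_left h2, Nat.log_pow (by norm_num)]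
    calc 2 ^ M = dL (2 ^ 2 ^ M) := this.symm
      _ ≤ dL n := Nat.log_mono_right (max_le_max hn le_rfl)
  calc M = Nat.log 2 (2 ^ M) := (Nat.log_pow (by norm_num) M).symm
    _ ≤ dlv n := Nat.log_mono_right hL

/-- If every finset of elements of `A` that are at most `n` has size at most `b n`,
and `b n / n` is dominated by a null sequence, the upper density of `A` is zero. -/
lemma upperDensity_eq_zero_of_le (A : Set ℕ) (g : ℕ → ℝ) (b : ℕ → ℕ)
    (hg : Filter.Tendsto g Filter.atTop (nhds 0))
    (hcard : ∀ n, ∀ s : Finset ℕ, (∀ x ∈ s, x ∈ A ∧ x ≤ n) → s.card ≤ b n)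
    (hle : ∀ᶠ n in Filter.atTop, (b n : ℝ) / n ≤ g n) :
    upperDensity A = 0 := by
  apply Filter.Tendsto.limsup_eq
  apply squeeze_zero' (f := fun n : ℕ =>
    (((Finset.Icc 1 n).filter (fun m => m ∈ A)).card : ℝ) / n) _ _ hg
  · filter_upwards with n
    positivity
  · filter_upwards [hle] with n hn
    refine le_trans ?_ hn
    rw [div_eq_mul_inv, div_eq_mul_inv]
    refine mul_le_mul_of_nonneg_right ?_ (by positivity)
    have : ((Finset.Icc 1 n).filter (fun m => m ∈ A)).card ≤ b n := by
      apply hcard n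
      intro x hx
      simp only [Finset.mem_filter, Finset.mem_Icc] at hx
      exact ⟨hx.2, hx.1.2⟩
    exact_mod_cast this

lemma upperDensity_finite_range {k : ℕ} (v : Fin k → ℕ) :
    upperDensity (Set.range v) = 0 := by
  apply upperDensity_eq_zero_of_le _ (fun n => (k : ℝ) / n) (fun _ => k)
    (tendsto_const_div_atTop_nhds_zero_nat (k : ℝ))
  · intro n s hs
    calc s.card ≤ (Finset.image v Finset.univ).card := Finset.card_le_card (fun x hx => by
          obtain ⟨i, hi⟩ := (hs x hx).1
          exact Finset.mem_image.mpr ⟨i, Finset.mem_univ i, hi⟩)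
      _ ≤ Finset.univ.card := Finset.card_image_le
      _ = k := by simp
  · filter_upwards with n
    exact le_rfl

lemma count_lemma (v : ℕ → ℕ) (hmono : StrictMono (fun i => dphi (v i)))
    (n : ℕ) (s : Finset ℕ) (hs : ∀ x ∈ s, x ∈ Set.range v ∧ x ≤ n) :
    s.card ≤ 3 * 2 ^ dlv n := by
  refine le_trans (Finset.card_le_card_of_injOn (s := s)
    (t := Finset.range (3 * 2 ^ dlv n)) (fun m => Function.invFun v m) ?_ ?_) (by simp)
  · intro a ha
    obtain ⟨⟨i, hi⟩, han⟩ := hs a ha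
    have heq : v (Function.invFun v a) = a := Function.invFun_eq ⟨i, hi⟩
    have h1 : Function.invFun v a ≤ dphi (v (Function.invFun v a)) := hmono.le_apply
    rw [heq] at h1
    have h2 : dphi a < 3 * 2 ^ dlv a := dphi_lt_bound
    have h3 : (2:ℕ) ^ dlv a ≤ 2 ^ dlv n := Nat.pow_le_pow_right (by norm_num) (dlv_mono han)
    simp only [Finset.mem_coe, Finset.mem_range]
    omega
  · intro a ha b hb hab
    have ha' := Function.invFun_eq (f := v) (hs a (Finset.mem_coe.mp ha)).1
    have hb' := Function.invFun_eq (f := v) (hs b (Finset.mem_coe.mp hb)).1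
    change Function.invFun v a = Function.invFun v b at hab
    rw [← ha', ← hb', hab]

theorem stmt0 :
    ∃ c : ℕ → ℕ → Fin 2,
      (∀ v : ℕ → ℕ, Function.Injective v →
        (∃ col : Fin 2, ∀ i : ℕ, c (v i) (v (i + 1)) = col) →
        upperDensity (Set.range v) = 0) ∧
      (∀ (m : ℕ) (v : Fin (m + 1) → ℕ), Function.Injective v →
        (∃ col : Fin 2, ∀ i : Fin m, c (v i.castSucc) (v i.succ) = col) →
        upperDensity (Set.range v) = 0) := by
  refine ⟨dcol, ?_, ?_⟩
  · rintro v hv ⟨col, hcol⟩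
    by_cases h0 : col = 0
    · -- colour 0 : sparse path
      subst h0
      refine upperDensity_eq_zero_of_le _ (fun n => 3 / (2:ℝ) ^ dlv n)
        (fun n => 3 * 2 ^ dlv n) ?_ ?_ ?_
      · have h1 : Filter.Tendsto (fun k : ℕ => (3:ℝ) / 2 ^ k) Filter.atTop (nhds 0) := by
          have h2 := (tendsto_pow_atTop_nhds_zero_of_lt_one (r := (2:ℝ)⁻¹)
            (by norm_num) (by norm_num)).const_mul (3:ℝ)
          simpa [div_eq_mul_inv, inv_pow] using h2
        exact h1.comp dlv_tendsto
      · have hmono : StrictMono (fun i => dphi (v i)) :=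
          strictMono_nat_of_lt_succ (fun i => dphi_lt_of_dcol_zero (hcol i))
        exact fun n => count_lemma v hmono n
      · filter_upwards [Filter.eventually_ge_atTop 2] with n hn
        have hk : 2 ^ dlv n * 2 ^ dlv n ≤ n := by
          have h1 : 2 ^ dlv n ≤ dL n := pow_dlv_le n
          have h2 : 2 ^ dL n ≤ n := by
            have hL : dL n = Nat.log 2 n := by rw [dL, max_eq_left hn]
            rw [hL]; exact Nat.pow_log_le_self 2 (by omega)
          calc 2 ^ dlv n * 2 ^ dlv n = 2 ^ (2 * dlv n) := by
                rw [← pow_add]; ring_nf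
            _ ≤ 2 ^ 2 ^ dlv n := Nat.pow_le_pow_right (by norm_num) (two_mul_le_two_pow _)
            _ ≤ 2 ^ dL n := Nat.pow_le_pow_right (by norm_num) h1
            _ ≤ n := h2
        rw [div_le_div_iff₀ (by positivity) (by positivity)]
        push_cast
        have hk' : ((2:ℝ) ^ dlv n * 2 ^ dlv n) ≤ n := by exact_mod_cast hk
        nlinarith [hk']
    · -- colour 1 : impossible for an infinite path
      exfalso
      have h1 : col = 1 := by fin_cases col <;> simp_all
      subst h1
      have key : ∀ i, dlv (v (i + 1)) ≤ dlv (v i) := by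
        intro i
        by_contra hcon
        push_neg at hcon
        have hz : dcol (v i) (v (i + 1)) = 0 := by
          simp [dcol, if_pos (Or.inl hcon)]
        rw [hcol i] at hz
        exact absurd hz (by decide)
      have hbd : ∀ i, dlv (v i) ≤ dlv (v 0) := by
        intro i
        induction i with
        | zero => exact le_rfl
        | succ k ih => exact le_trans (key k) ih
      have hsub : Set.range v ⊆ Set.Iio (2 ^ 2 ^ (dlv (v 0) + 1)) := by
        rintro _ ⟨i, rfl⟩
        exact lt_of_dlv_le (hbd i)
      exact (Set.infinite_range_of_injective hv) ((Set.finite_Iio _).subset hsub)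
  · intro m v _ _
    exact upperDensity_finite_range v
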